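/- A completely simple semigroup M[G,Q] is isomorphic to the direct product of the group G with a rectangular band if and only if the product of any two idempotents of M[G,Q] is idempotent. -/

import Mathlib

/-- A completely simple semigroup `M[G,Q]` (on `I × G × Λ` with multiplication
`(i,g,λ)(j,h,ρ) = (i, g·Q_{λ,j}·h, ρ)`) is isomorphic to the direct product of the group
`G` with the rectangular band on `I × Λ` if and only if the product of any two
idempotents of `M[G,Q]` is idempotent. -/
theorem stmt12 {G : Type*} [Group G] {I Λ : Type*} [Nonempty I] [Nonempty Λ]
    (Q : Λ → I → G) :
    let m : I × G × Λ → I × G × Λ → I × G × Λ :=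
      fun x y => (x.1, x.2.1 * Q x.2.2 y.1 * y.2.1, y.2.2)
    ((∃ φ : (I × G × Λ) ≃ G × (I × Λ),
        ∀ x y : I × G × Λ,
          φ (m x y) = ((φ x).1 * (φ y).1, ((φ x).2.1, (φ y).2.2))) ↔
      (∀ e f : I × G × Λ, m e e = e → m f f = f → m (m e f) (m e f) = m e f)) := by
  intro m
  constructor
  · rintro ⟨φ, hφ⟩ e f he hf
    have h1 : (φ e).1 = 1 := by
      have := congrArg Prod.fst (he ▸ hφ e e)
      exact mul_eq_left.mp this.symm
    have h2 : (φ f).1 = 1 := by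
      have := congrArg Prod.fst (hf ▸ hφ f f)
      exact mul_eq_left.mp this.symm
    apply φ.injective
    rw [hφ (m e f) (m e f), hφ e f, h1, h2]
    simp
  · intro h
    obtain ⟨i₀⟩ := ‹Nonempty I›
    obtain ⟨l0⟩ := ‹Nonempty Λ›
    have key : ∀ (lam : Λ) (j : I),
        Q lam j = Q lam i₀ * (Q l0 i₀)⁻¹ * Q l0 j := by
      intro lam j
      have he : m (i₀, (Q lam i₀)⁻¹, lam) (i₀, (Q lam i₀)⁻¹, lam)
          = (i₀, (Q lam i₀)⁻¹, lam) := by simp [m]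
      have hf : m (j, (Q l0 j)⁻¹, l0) (j, (Q l0 j)⁻¹, l0)
          = (j, (Q l0 j)⁻¹, l0) := by simp [m]
      have hh := h _ _ he hf
      simp only [m, Prod.mk.injEq] at hh
      obtain ⟨-, h2, -⟩ := hh
      set g := (Q lam i₀)⁻¹ * Q lam j * (Q l0 j)⁻¹ with hg
      have h3 : g * Q l0 i₀ = 1 := mul_eq_right.mp h2
      have h4 : g = (Q l0 i₀)⁻¹ := by
        rw [← one_mul (Q l0 i₀)⁻¹, ← h3]; group
      have := congrArg (fun x => Q lam i₀ * x * Q l0 j) h4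
      simp only [hg] at this
      calc Q lam j = Q lam i₀ * ((Q lam i₀)⁻¹ * Q lam j * (Q l0 j)⁻¹) * Q l0 j := by group
        _ = Q lam i₀ * (Q l0 i₀)⁻¹ * Q l0 j := by rw [this]
    refine ⟨{
      toFun := fun x => (Q l0 x.1 * x.2.1 * Q x.2.2 i₀ * (Q l0 i₀)⁻¹, (x.1, x.2.2))
      invFun := fun y => (y.2.1, (Q l0 y.2.1)⁻¹ * y.1 * Q l0 i₀ * (Q y.2.2 i₀)⁻¹, y.2.2)
      left_inv := by rintro ⟨i, g, lam⟩; simp; group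
      right_inv := by rintro ⟨g, i, lam⟩; simp; group }, ?_⟩
    rintro ⟨i, g, lam⟩ ⟨j, hg, rho⟩
    simp only [m, Equiv.coe_fn_mk, Prod.mk.injEq, and_true, true_and]
    rw [key lam j]
    group
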